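/- Let T₁ = [[1,0],[0,0]], T₂ = (1/2)[[1,1],[1,1]], T₃ = [[0,0],[0,1]] be 2×2 Hermitian matrices, and let ω = T₁⊗T₂ - T₂⊗T₂ + T₂⊗T₁ + T₃⊗T₃, a 4×4 Hermitian matrix. Then ω is not positive semidefinite; in fact ω has (1-√2)/2 as an eigenvalue. -/

import Mathlib

open Kronecker

noncomputable section

def T₁ : Matrix (Fin 2) (Fin 2) ℝ := !![1, 0; 0, 0]
def T₂ : Matrix (Fin 2) (Fin 2) ℝ := (1 / 2 : ℝ) • !![1, 1; 1, 1]
def T₃ : Matrix (Fin 2) (Fin 2) ℝ := !![0, 0; 0, 1]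

def ωPR : Matrix (Fin 2 × Fin 2) (Fin 2 × Fin 2) ℝ :=
  T₁ ⊗ₖ T₂ - T₂ ⊗ₖ T₂ + T₂ ⊗ₖ T₁ + T₃ ⊗ₖ T₃

def vPR : Fin 2 × Fin 2 → ℝ := fun p =>
  if p = (0, 0) then 1
  else if p = (1, 1) then -1
  else -(1 + Real.sqrt 2)

lemma key : ωPR.mulVec vPR = ((1 - Real.sqrt 2) / 2) • vPR := by
  have hs : Real.sqrt 2 * Real.sqrt 2 = 2 := Real.mul_self_sqrt (by norm_num)
  funext p
  obtain ⟨i, j⟩ := p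
  fin_cases i <;> fin_cases j <;>
    simp [ωPR, T₁, T₂, T₃, vPR, Matrix.mulVec, dotProduct,
      Fintype.sum_prod_type, Fin.sum_univ_two, Matrix.kroneckerMap_apply] <;>
    nlinarith [hs, Real.sqrt_nonneg 2]

theorem omega_not_posSemidef :
    ¬ ωPR.PosSemidef ∧
    ∃ v : Fin 2 × Fin 2 → ℝ, v ≠ 0 ∧
      ωPR.mulVec v = ((1 - Real.sqrt 2) / 2) • v := by
  have hs : Real.sqrt 2 * Real.sqrt 2 = 2 := Real.mul_self_sqrt (by norm_num)
  have hs1 : 1 < Real.sqrt 2 := by nlinarith [Real.sqrt_nonneg 2]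
  have hv0 : vPR ≠ 0 := by
    intro h
    have := congrFun h (0, 0)
    simp [vPR] at this
  refine ⟨?_, vPR, hv0, key⟩
  intro hpsd
  have h := hpsd.dotProduct_mulVec_nonneg vPR
  rw [key] at h
  have hd : dotProduct (star vPR) (((1 - Real.sqrt 2) / 2) • vPR)
      = ((1 - Real.sqrt 2) / 2) * dotProduct vPR vPR := by
    simp [dotProduct_smul, star_trivial]
  rw [hd] at h
  have hvv : 0 < dotProduct vPR vPR := by
    have h2 : dotProduct vPR vPR = 1 * 1 + ((-(1+Real.sqrt 2))*(-(1+Real.sqrt 2))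
        + ((-(1+Real.sqrt 2))*(-(1+Real.sqrt 2)) + (-1)*(-1))) := by
      simp [dotProduct, Fintype.sum_prod_type, Fin.sum_univ_two, vPR]; ring
    nlinarith [Real.sqrt_nonneg 2]
  nlinarith

end
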